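/- Let E be a directed graph and K a field. If the center Z(KE) of the path algebra is nonzero and not contained in K·1, then E is a cycle, i.e., E consists of n ≥ 1 vertices u_1, …, u_n and n edges f_1, …, f_n with s(f_i) = u_i, r(f_i) = u_{i+1} for i < n and r(f_n) = u_1. -/

import Mathlib

/-! Basic infrastructure: directed graphs and their path algebras.

The path algebra `KE` is realized as the non-unital subalgebra generated by the
(images of the) vertices and edges inside the unital algebra `PA K E`, which is the
quotient of the free algebra on vertices and edges by the usual path-algebra
relations (vertices are orthogonal idempotents acting as local units on edges).
Words of composable edges are exactly the paths, so `KE` has the paths as a basis. -/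

/-- A directed graph `E = (E⁰, E¹, s, r)`. -/
structure DirGraph : Type 1 where
  V : Type
  Edge : Type
  s : Edge → V
  r : Edge → V

/-- A (non-unital, possibly non-closed) subset `S` of an algebra is *prime* if it is nonzero
and `a S b = 0` implies `a = 0` or `b = 0` for `a, b ∈ S`. -/
def IsPrimeSet {A : Type} [NonUnitalNonAssocSemiring A] (S : Set A) : Prop :=
  (∃ a ∈ S, a ≠ 0) ∧ ∀ a ∈ S, ∀ b ∈ S, (∀ x ∈ S, a * x * b = 0) → a = 0 ∨ b = 0

/-- `J` is a two-sided ideal of the (possibly non-unital) subalgebra with carrier `S`. -/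
def IsIdealOf (K : Type) [Field K] {A : Type} [Ring A] [Algebra K A] (S J : Set A) : Prop :=
  J ⊆ S ∧ (0 : A) ∈ J ∧ (∀ x ∈ J, ∀ y ∈ J, x + y ∈ J) ∧
    (∀ k : K, ∀ x ∈ J, k • x ∈ J) ∧ (∀ a ∈ S, ∀ x ∈ J, a * x ∈ J ∧ x * a ∈ J)

namespace DirGraph

/-- Generators of the path algebra: vertices and edges. -/
abbrev Gen (E : DirGraph) : Type := E.V ⊕ E.Edge

variable (K : Type) [Field K] (E : DirGraph)

/-- The defining relations of the path algebra: vertices are orthogonal idempotents,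
`s(e)·e = e`, `e·r(e) = e`, and all other vertex-edge products vanish. -/
inductive PathRel : FreeAlgebra K E.Gen → FreeAlgebra K E.Gen → Prop
  | vv_eq (u : E.V) :
      PathRel (FreeAlgebra.ι K (Sum.inl u) * FreeAlgebra.ι K (Sum.inl u))
        (FreeAlgebra.ι K (Sum.inl u))
  | vv_ne (u v : E.V) : u ≠ v →
      PathRel (FreeAlgebra.ι K (Sum.inl u) * FreeAlgebra.ι K (Sum.inl v)) 0
  | ve_eq (e : E.Edge) :
      PathRel (FreeAlgebra.ι K (Sum.inl (E.s e)) * FreeAlgebra.ι K (Sum.inr e))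
        (FreeAlgebra.ι K (Sum.inr e))
  | ve_ne (u : E.V) (e : E.Edge) : E.s e ≠ u →
      PathRel (FreeAlgebra.ι K (Sum.inl u) * FreeAlgebra.ι K (Sum.inr e)) 0
  | ev_eq (e : E.Edge) :
      PathRel (FreeAlgebra.ι K (Sum.inr e) * FreeAlgebra.ι K (Sum.inl (E.r e)))
        (FreeAlgebra.ι K (Sum.inr e))
  | ev_ne (e : E.Edge) (u : E.V) : E.r e ≠ u →
      PathRel (FreeAlgebra.ι K (Sum.inr e) * FreeAlgebra.ι K (Sum.inl u)) 0

/-- The ambient unital algebra (the unitalization of the path algebra). -/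
abbrev PA : Type := RingQuot (E.PathRel K)

/-- The image of a vertex in the path algebra. -/
noncomputable def vtx (u : E.V) : E.PA K :=
  RingQuot.mkAlgHom K (E.PathRel K) (FreeAlgebra.ι K (Sum.inl u))

/-- The image of an edge in the path algebra. -/
noncomputable def edg (e : E.Edge) : E.PA K :=
  RingQuot.mkAlgHom K (E.PathRel K) (FreeAlgebra.ι K (Sum.inr e))

/-- The path algebra `KE`: the (non-unital) subalgebra spanned by all paths, i.e.
generated by the vertices and edges. -/
noncomputable def KE : NonUnitalSubalgebra K (E.PA K) :=
  NonUnitalAlgebra.adjoin K (Set.range (E.vtx K) ∪ Set.range (E.edg K))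

/-- The center `Z(KE)` of the path algebra. -/
def relCenter : Set (E.PA K) :=
  {z | z ∈ E.KE K ∧ ∀ a ∈ E.KE K, a * z = z * a}

/-- `E.IsPathFrom u v l` : the list of edges `l` is a path from `u` to `v`
(`l = []` is the trivial path at `u = v`). -/
def IsPathFrom : E.V → E.V → List E.Edge → Prop
  | u, v, [] => u = v
  | u, v, e :: l => E.s e = u ∧ IsPathFrom (E.r e) v l

/-- The element of the path algebra corresponding to the path starting at `u`
with list of edges `l` (for `l = []` this is the vertex `u` itself). -/
noncomputable def pathElem (u : E.V) (l : List E.Edge) : E.PA K :=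
  E.vtx K u * (l.map (E.edg K)).prod

/-- The sum of all vertices: the unit of `KE` when `E⁰` is finite. -/
noncomputable def unitKE : E.PA K := ∑ᶠ u : E.V, E.vtx K u

/-- The scalar multiples `K·1` of the unit of `KE`. -/
noncomputable def scalarSet : Set (E.PA K) := Set.range fun k : K => k • E.unitKE K

/-- One step in the underlying undirected graph. -/
def Step (u v : E.V) : Prop :=
  (∃ e : E.Edge, E.s e = u ∧ E.r e = v) ∨ (∃ e : E.Edge, E.s e = v ∧ E.r e = u)

/-- `u ∼ v` : the vertices `u` and `v` are connected in the underlying undirected graph. -/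
def Connected (u v : E.V) : Prop := Relation.ReflTransGen E.Step u v

/-- The graph `E` is connected. -/
def IsConnectedGraph : Prop := ∀ u v : E.V, E.Connected u v

/-- The graph `E` is a cycle: `n ≥ 1` vertices `u₁, …, uₙ` and `n` edges `f₁, …, fₙ` with
`s(fᵢ) = uᵢ`, `r(fᵢ) = uᵢ₊₁` (indices mod `n`). -/
def IsCycleGraph : Prop :=
  ∃ n : ℕ, ∃ hn : 0 < n, ∃ (hv : Fin n ≃ E.V) (he : Fin n ≃ E.Edge),
    ∀ i : Fin n, E.s (he i) = hv i ∧ E.r (he i) = hv ⟨(i.1 + 1) % n, Nat.mod_lt _ hn⟩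

end DirGraph

open scoped Classical

namespace DirGraph
variable {E : DirGraph}

/-- Endpoint of a list of edges starting at `u`. -/
def dst (E : DirGraph) : E.V → List E.Edge → E.V
  | u, [] => u
  | _, e :: l => E.dst (E.r e) l

/-- `l` is a valid path starting at `u`. -/
def Ok (E : DirGraph) (u : E.V) (l : List E.Edge) : Prop := E.IsPathFrom u (E.dst u l) l

lemma ok_nil (u : E.V) : E.Ok u [] := rfl

lemma ok_cons {u : E.V} {e : E.Edge} {l : List E.Edge} :
    E.Ok u (e :: l) ↔ E.s e = u ∧ E.Ok (E.r e) l := Iff.rfl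

lemma isPathFrom_iff {u v : E.V} {l : List E.Edge} :
    E.IsPathFrom u v l ↔ (E.Ok u l ∧ v = E.dst u l) := by
  induction l generalizing u with
  | nil => constructor
           · intro h; exact ⟨rfl, h.symm⟩
           · rintro ⟨-, h⟩; exact h.symm
  | cons e l ih =>
      constructor
      · rintro ⟨h1, h2⟩
        rcases ih.1 h2 with ⟨ho, hd⟩
        exact ⟨⟨h1, ho⟩, hd⟩
      · rintro ⟨⟨h1, ho⟩, hd⟩
        exact ⟨h1, ih.2 ⟨ho, hd⟩⟩

lemma dst_append (u : E.V) (l l' : List E.Edge) :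
    E.dst u (l ++ l') = E.dst (E.dst u l) l' := by
  induction l generalizing u with
  | nil => rfl
  | cons e l ih => simp [dst, ih]

lemma ok_append {u : E.V} {l l' : List E.Edge} (h : E.Ok u l) (h' : E.Ok (E.dst u l) l') :
    E.Ok u (l ++ l') := by
  induction l generalizing u with
  | nil => exact h'
  | cons e l ih =>
      rcases h with ⟨h1, h2⟩
      exact ⟨h1, ih h2 h'⟩

lemma ok_append_iff {u : E.V} {l l' : List E.Edge} :
    E.Ok u (l ++ l') ↔ E.Ok u l ∧ E.Ok (E.dst u l) l' := by
  constructor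
  · intro h
    induction l generalizing u with
    | nil => exact ⟨rfl, h⟩
    | cons e l ih =>
        rcases h with ⟨h1, h2⟩
        rcases ih h2 with ⟨ha, hb⟩
        exact ⟨⟨h1, ha⟩, hb⟩
  · rintro ⟨h, h'⟩; exact ok_append h h'

/-- The type of (finite) paths in `E`. -/
def Pth (E : DirGraph) : Type := {p : E.V × List E.Edge // E.Ok p.1 p.2}

namespace Pth

def src (p : E.Pth) : E.V := p.1.1
def edges (p : E.Pth) : List E.Edge := p.1.2
def tgt (p : E.Pth) : E.V := E.dst p.src p.edges
lemma ok (p : E.Pth) : E.Ok p.src p.edges := p.2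

@[simp] lemma src_mk (pr : E.V × List E.Edge) (h : E.Ok pr.1 pr.2) :
    Pth.src (⟨pr, h⟩ : E.Pth) = pr.1 := rfl
@[simp] lemma edges_mk (pr : E.V × List E.Edge) (h : E.Ok pr.1 pr.2) :
    Pth.edges (⟨pr, h⟩ : E.Pth) = pr.2 := rfl

@[ext] lemma ext {p q : E.Pth} (h1 : p.src = q.src) (h2 : p.edges = q.edges) : p = q :=
  Subtype.ext (Prod.ext h1 h2)

/-- Concatenation of composable paths. -/
def comp (p q : E.Pth) (h : p.tgt = q.src) : E.Pth :=
  ⟨(p.src, p.edges ++ q.edges), ok_append p.ok (by rw [show E.dst p.src p.edges = q.src from h]; exact q.ok)⟩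

@[simp] lemma comp_src (p q : E.Pth) (h : p.tgt = q.src) : (p.comp q h).src = p.src := rfl
@[simp] lemma comp_edges (p q : E.Pth) (h : p.tgt = q.src) : (p.comp q h).edges = p.edges ++ q.edges := rfl
@[simp] lemma comp_tgt (p q : E.Pth) (h : p.tgt = q.src) : (p.comp q h).tgt = q.tgt := by
  show E.dst _ _ = _
  rw [comp_src, comp_edges, dst_append]
  rw [show E.dst p.src p.edges = q.src from h]
  rfl

/-- The trivial path at a vertex. -/
def triv (u : E.V) : E.Pth := ⟨(u, []), ok_nil u⟩
@[simp] lemma triv_src (u : E.V) : (triv u : E.Pth).src = u := rfl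
@[simp] lemma triv_edges (u : E.V) : (triv u : E.Pth).edges = ([] : List E.Edge) := rfl
@[simp] lemma triv_tgt (u : E.V) : (triv u : E.Pth).tgt = u := rfl

/-- The single-edge path. -/
def sgl (e : E.Edge) : E.Pth := ⟨(E.s e, [e]), ⟨rfl, rfl⟩⟩
@[simp] lemma sgl_src (e : E.Edge) : (sgl e : E.Pth).src = E.s e := rfl
@[simp] lemma sgl_edges (e : E.Edge) : (sgl e : E.Pth).edges = [e] := rfl
@[simp] lemma sgl_tgt (e : E.Edge) : (sgl e : E.Pth).tgt = E.r e := rfl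

end Pth

/-- Paths plus a formal one and a formal (absorbing) zero: a monoid. -/
inductive PMon (E : DirGraph) : Type
  | zero : PMon E
  | one : PMon E
  | pth (p : E.Pth) : PMon E

namespace PMon

noncomputable def pmul : PMon E → PMon E → PMon E
  | .one, x => x
  | x, .one => x
  | .zero, _ => .zero
  | _, .zero => .zero
  | .pth p, .pth q =>
      if h : p.tgt = q.src then .pth (p.comp q h) else .zero

@[simp] lemma one_pmul (x : PMon E) : pmul .one x = x := by cases x <;> rfl
@[simp] lemma pmul_one (x : PMon E) : pmul x .one = x := by cases x <;> rfl
@[simp] lemma zero_pmul (x : PMon E) : pmul .zero x = .zero := by cases x <;> rfl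
@[simp] lemma pmul_zero (x : PMon E) : pmul x .zero = .zero := by cases x <;> rfl
lemma pth_pmul_pth (p q : E.Pth) :
    pmul (.pth p) (.pth q) = if h : p.tgt = q.src then .pth (p.comp q h) else .zero := rfl

lemma pmul_assoc (a b c : PMon E) : pmul (pmul a b) c = pmul a (pmul b c) := by
  cases a with
  | one => simp only [one_pmul]
  | zero => simp only [zero_pmul]
  | pth p =>
    cases b with
    | one => simp only [one_pmul, pmul_one]
    | zero => simp only [zero_pmul, pmul_zero]
    | pth q =>
      cases c with
      | one => simp only [pmul_one]
      | zero => simp only [pmul_zero]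
      | pth r =>
        by_cases h1 : p.tgt = q.src
        · by_cases h2 : q.tgt = r.src
          · rw [pth_pmul_pth p q, dif_pos h1, pth_pmul_pth q r, dif_pos h2,
              pth_pmul_pth, pth_pmul_pth, dif_pos (by simpa using h2),
              dif_pos (by simpa using h1)]
            congr 1
            ext
            · rfl
            · simp
          · rw [pth_pmul_pth p q, dif_pos h1, pth_pmul_pth q r, dif_neg h2,
              pth_pmul_pth, dif_neg (by simpa using h2), pmul_zero]
        · by_cases h2 : q.tgt = r.src
          · rw [pth_pmul_pth p q, dif_neg h1, zero_pmul, pth_pmul_pth q r, dif_pos h2,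
              pth_pmul_pth, dif_neg (by simpa using h1)]
          · rw [pth_pmul_pth p q, dif_neg h1, zero_pmul, pth_pmul_pth q r, dif_neg h2,
              pmul_zero]

noncomputable instance : Monoid (PMon E) where
  one := .one
  mul := pmul
  one_mul := one_pmul
  mul_one := pmul_one
  mul_assoc := pmul_assoc

@[simp] lemma one_def : (1 : PMon E) = .one := rfl
lemma mul_def (x y : PMon E) : x * y = pmul x y := rfl

@[simp] lemma zero_mul' (x : PMon E) : (.zero : PMon E) * x = .zero := zero_pmul x
@[simp] lemma mul_zero' (x : PMon E) : x * (.zero : PMon E) = .zero := pmul_zero x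
lemma pth_mul_pth (p q : E.Pth) :
    (.pth p : PMon E) * .pth q = if h : p.tgt = q.src then .pth (p.comp q h) else .zero := rfl
lemma pth_mul_pth_of (p q : E.Pth) (h : p.tgt = q.src) :
    (.pth p : PMon E) * .pth q = .pth (p.comp q h) := by rw [pth_mul_pth, dif_pos h]
lemma pth_mul_pth_not (p q : E.Pth) (h : ¬ p.tgt = q.src) :
    (.pth p : PMon E) * .pth q = .zero := by rw [pth_mul_pth, dif_neg h]

end PMon
end DirGraph
namespace DirGraph
noncomputable section

variable (K : Type) [Field K] (E : DirGraph)

/-- The model algebra: monoid algebra on the path monoid. -/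
abbrev A0 : Type := MonoidAlgebra K (PMon E)

instance : CoeFun (A0 K E) (fun _ => PMon E → K) := ⟨fun f => ⇑f.coeff⟩

open MonoidAlgebra Finsupp

/-- Projection killing the `zero` coordinate. -/
def projz : A0 K E →ₗ[K] A0 K E :=
  LinearMap.id - (MonoidAlgebra.lsingle PMon.zero).comp
    ((Finsupp.lapply PMon.zero).comp (MonoidAlgebra.coeffLinearEquiv K).toLinearMap)

variable {K E}

lemma fsum_eq_zero {α M N : Type*} [Zero M] [AddCommMonoid N] (f : α →₀ M)
    (g : α → M → N) (h : ∀ a ∈ f.support, g a (f a) = 0) : f.sum g = 0 :=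
  Finset.sum_eq_zero h

lemma projz_apply (f : A0 K E) :
    projz K E f = f - MonoidAlgebra.single (PMon.zero : PMon E) (f PMon.zero) := rfl

@[simp] lemma projz_apply_zero (f : A0 K E) : projz K E f PMon.zero = 0 := by
  classical
  rw [projz_apply]
  rw [show ((f - MonoidAlgebra.single (PMon.zero : PMon E) (f PMon.zero)) PMon.zero)
    = f PMon.zero - MonoidAlgebra.single (PMon.zero : PMon E) (f PMon.zero) PMon.zero
    from rfl, MonoidAlgebra.single_apply, if_pos rfl, sub_self]

lemma projz_apply_ne (f : A0 K E) {x : PMon E} (h : x ≠ PMon.zero) :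
    projz K E f x = f x := by
  classical
  rw [projz_apply]
  rw [show ((f - MonoidAlgebra.single (PMon.zero : PMon E) (f PMon.zero)) x)
    = f x - MonoidAlgebra.single (PMon.zero : PMon E) (f PMon.zero) x from rfl,
    MonoidAlgebra.single_apply, if_neg (Ne.symm h), sub_zero]

lemma projz_single_ne {x : PMon E} (h : x ≠ PMon.zero) (c : K) :
    projz K E (MonoidAlgebra.single x c) = MonoidAlgebra.single x c := by
  classical
  rw [projz_apply, MonoidAlgebra.single_apply, if_neg h, MonoidAlgebra.single_zero, sub_zero]

@[simp] lemma projz_single_zero (c : K) :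
    projz K E (MonoidAlgebra.single (PMon.zero : PMon E) c) = 0 := by
  classical
  rw [projz_apply, MonoidAlgebra.single_apply, if_pos rfl, sub_self]

lemma projz_eq_zero_of (f : A0 K E) (h : ∀ x, x ≠ PMon.zero → f x = 0) :
    projz K E f = 0 := by
  apply MonoidAlgebra.ext
  apply Finsupp.ext
  intro x
  by_cases hx : x = PMon.zero
  · subst hx; simp
  · rw [projz_apply_ne f hx, h x hx]; rfl

/-- Coefficient of `single m c * f` when the solutions of `m * b = x` are controlled. -/
lemma single_mul_apply_of (m : PMon E) (c : K) (f : A0 K E) (x b0 : PMon E)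
    (hb : m * b0 = x) (huniq : ∀ b, m * b = x → b = b0 ∨ f b = 0) :
    (MonoidAlgebra.single m c * f) x = c * f b0 := by
  classical
  rw [MonoidAlgebra.mul_apply, MonoidAlgebra.coeff_single, Finsupp.sum_single_index]
  · rw [Finsupp.sum_eq_single b0]
    · rw [if_pos hb]
    · intro b hfb hbne
      rw [if_neg]
      intro hmb
      rcases huniq b hmb with h | h
      · exact hbne h
      · exact hfb h
    · intro _; rw [if_pos hb, mul_zero]
  · apply fsum_eq_zero
    intro b _
    split <;> simp

lemma single_mul_apply_zero (m : PMon E) (c : K) (f : A0 K E) (x : PMon E)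
    (h : ∀ b, m * b = x → f b = 0) :
    (MonoidAlgebra.single m c * f) x = 0 := by
  classical
  rw [MonoidAlgebra.mul_apply, MonoidAlgebra.coeff_single, Finsupp.sum_single_index]
  · apply fsum_eq_zero
    intro b _
    split
    · rename_i hmb; rw [h b hmb, mul_zero]
    · rfl
  · apply fsum_eq_zero
    intro b _
    split <;> simp

lemma mul_single_apply_of (m : PMon E) (c : K) (f : A0 K E) (x b0 : PMon E)
    (hb : b0 * m = x) (huniq : ∀ b, b * m = x → b = b0 ∨ f b = 0) :
    (f * MonoidAlgebra.single m c) x = f b0 * c := by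
  classical
  rw [MonoidAlgebra.mul_apply]
  have : ∀ b1 (c1 : K), (Finsupp.sum (MonoidAlgebra.single m c).coeff
      fun a₂ b₂ => if b1 * a₂ = x then c1 * b₂ else 0) =
      if b1 * m = x then c1 * c else 0 := by
    intro b1 c1
    rw [MonoidAlgebra.coeff_single, Finsupp.sum_single_index]
    split <;> simp
  simp only [this]
  rw [Finsupp.sum_eq_single b0]
  · rw [if_pos hb, mul_comm]
  · intro b hfb hbne
    rw [if_neg]
    intro hmb
    rcases huniq b hmb with h | h
    · exact hbne h
    · exact hfb h
  · intro _; rw [if_pos hb, zero_mul]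

lemma mul_single_apply_zero (m : PMon E) (c : K) (f : A0 K E) (x : PMon E)
    (h : ∀ b, b * m = x → f b = 0) :
    (f * MonoidAlgebra.single m c) x = 0 := by
  classical
  rw [MonoidAlgebra.mul_apply]
  apply fsum_eq_zero
  intro b hb
  rw [MonoidAlgebra.coeff_single, Finsupp.sum_single_index]
  · split
    · rename_i hmb; rw [h b hmb, zero_mul]
    · rfl
  · split <;> simp

variable (K E)

/-- The monoid element associated to a generator. -/
def genm : E.Gen → PMon E
  | .inl u => .pth (.triv u)
  | .inr e => .pth (.sgl e)

/-- Left multiplication by a monoid element followed by the projection. -/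
def Lop (m : PMon E) : Module.End K (A0 K E) :=
  (projz K E) ∘ₗ LinearMap.mulLeft K (MonoidAlgebra.single m 1)

variable {K E}

lemma Lop_apply (m : PMon E) (f : A0 K E) :
    Lop K E m f = projz K E (MonoidAlgebra.single m 1 * f) := rfl

lemma projz_mul_projz (m : PMon E) (f : A0 K E) :
    projz K E (MonoidAlgebra.single m 1 * projz K E f) =
      projz K E (MonoidAlgebra.single m 1 * f) := by
  rw [projz_apply f, mul_sub, map_sub]
  have : (MonoidAlgebra.single m 1 : A0 K E) * MonoidAlgebra.single (PMon.zero : PMon E) (f PMon.zero) =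
      MonoidAlgebra.single (PMon.zero : PMon E) (f PMon.zero) := by
    rw [MonoidAlgebra.single_mul_single, one_mul, PMon.mul_zero']
  rw [this, projz_single_zero, sub_zero]

lemma Lop_mul (m m' : PMon E) :
    (Lop K E m) * (Lop K E m') = (projz K E) ∘ₗ
      LinearMap.mulLeft K (MonoidAlgebra.single (m * m') 1) := by
  apply LinearMap.ext; intro f
  rw [Module.End.mul_apply, LinearMap.comp_apply, LinearMap.mulLeft_apply]
  rw [Lop_apply, Lop_apply, projz_mul_projz, ← mul_assoc, MonoidAlgebra.single_mul_single,
    one_mul]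

lemma Lop_zero_eq :
    (projz K E) ∘ₗ LinearMap.mulLeft K (MonoidAlgebra.single (PMon.zero : PMon E) 1)
      = 0 := by
  apply LinearMap.ext; intro f
  rw [LinearMap.comp_apply, LinearMap.mulLeft_apply, LinearMap.zero_apply]
  apply projz_eq_zero_of
  intro x hx
  apply single_mul_apply_zero
  intro b hb
  rw [PMon.zero_mul'] at hb
  exact absurd hb.symm hx

lemma Lop_mul_pth {m'' : PMon E} (m m' : PMon E) (hmm : m * m' = m'') :
    (Lop K E m) * (Lop K E m') = (projz K E) ∘ₗ
      LinearMap.mulLeft K (MonoidAlgebra.single m'' 1) := by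
  rw [Lop_mul, hmm]

end
end DirGraph
namespace DirGraph
noncomputable section

variable {E : DirGraph}

namespace PMon

@[simp] lemma triv_mul_triv_self (u : E.V) :
    (.pth (.triv u) : PMon E) * .pth (.triv u) = .pth (.triv u) := by
  rw [pth_mul_pth_of _ _ (by simp)]
  exact congrArg PMon.pth (Pth.ext rfl rfl)

lemma triv_mul_triv_ne {u v : E.V} (h : u ≠ v) :
    (.pth (.triv u) : PMon E) * .pth (.triv v) = .zero := by
  rw [pth_mul_pth_not]; simpa using h

@[simp] lemma triv_mul_sgl_self (e : E.Edge) :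
    (.pth (.triv (E.s e)) : PMon E) * .pth (.sgl e) = .pth (.sgl e) := by
  rw [pth_mul_pth_of _ _ (by simp)]
  exact congrArg PMon.pth (Pth.ext rfl rfl)

lemma triv_mul_sgl_ne {u : E.V} {e : E.Edge} (h : E.s e ≠ u) :
    (.pth (.triv u) : PMon E) * .pth (.sgl e) = .zero := by
  rw [pth_mul_pth_not]; simpa using fun hh => h hh.symm

@[simp] lemma sgl_mul_triv_self (e : E.Edge) :
    (.pth (.sgl e) : PMon E) * .pth (.triv (E.r e)) = .pth (.sgl e) := by
  rw [pth_mul_pth_of _ _ (by simp)]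
  exact congrArg PMon.pth (Pth.ext rfl rfl)

lemma sgl_mul_triv_ne {u : E.V} {e : E.Edge} (h : E.r e ≠ u) :
    (.pth (.sgl e) : PMon E) * .pth (.triv u) = .zero := by
  rw [pth_mul_pth_not]; simpa using h

end PMon

variable (K : Type) [Field K] (E : DirGraph)

lemma genm_inl (u : E.V) : genm E (Sum.inl u) = .pth (.triv u) := rfl
lemma genm_inr (e : E.Edge) : genm E (Sum.inr e) = .pth (.sgl e) := rfl

/-- The representation of the free algebra on the model. -/
def Fhom : FreeAlgebra K E.Gen →ₐ[K] Module.End K (A0 K E) :=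
  FreeAlgebra.lift K fun g => Lop K E (genm E g)

lemma Fhom_rel : ∀ ⦃x y : FreeAlgebra K E.Gen⦄, E.PathRel K x y → Fhom K E x = Fhom K E y := by
  intro x y h
  cases h with
  | vv_eq u =>
      simp only [map_mul, Fhom, FreeAlgebra.lift_ι_apply, genm_inl]
      rw [Lop_mul_pth _ _ (PMon.triv_mul_triv_self u)]
      rfl
  | vv_ne u v huv =>
      simp only [map_mul, map_zero, Fhom, FreeAlgebra.lift_ι_apply, genm_inl]
      rw [Lop_mul_pth _ _ (PMon.triv_mul_triv_ne huv), Lop_zero_eq]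
  | ve_eq e =>
      simp only [map_mul, Fhom, FreeAlgebra.lift_ι_apply, genm_inl, genm_inr]
      rw [Lop_mul_pth _ _ (PMon.triv_mul_sgl_self e)]
      rfl
  | ve_ne u e hne =>
      simp only [map_mul, map_zero, Fhom, FreeAlgebra.lift_ι_apply, genm_inl, genm_inr]
      rw [Lop_mul_pth _ _ (PMon.triv_mul_sgl_ne hne), Lop_zero_eq]
  | ev_eq e =>
      simp only [map_mul, Fhom, FreeAlgebra.lift_ι_apply, genm_inl, genm_inr]
      rw [Lop_mul_pth _ _ (PMon.sgl_mul_triv_self e)]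
      rfl
  | ev_ne e u hne =>
      simp only [map_mul, map_zero, Fhom, FreeAlgebra.lift_ι_apply, genm_inl, genm_inr]
      rw [Lop_mul_pth _ _ (PMon.sgl_mul_triv_ne hne), Lop_zero_eq]

/-- The representation of the path algebra on the model. -/
def rho : E.PA K →ₐ[K] Module.End K (A0 K E) :=
  RingQuot.liftAlgHom K ⟨Fhom K E, Fhom_rel K E⟩

lemma rho_vtx (u : E.V) : rho K E (E.vtx K u) = Lop K E (.pth (.triv u)) := by
  rw [vtx, rho, RingQuot.liftAlgHom_mkAlgHom_apply, Fhom, FreeAlgebra.lift_ι_apply, genm_inl]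

lemma rho_edg (e : E.Edge) : rho K E (E.edg K e) = Lop K E (.pth (.sgl e)) := by
  rw [edg, rho, RingQuot.liftAlgHom_mkAlgHom_apply, Fhom, FreeAlgebra.lift_ι_apply, genm_inr]

variable {K E}

lemma Lop_single (m m' : PMon E) (c : K) :
    Lop K E m (MonoidAlgebra.single m' c) = projz K E (MonoidAlgebra.single (m * m') c) := by
  rw [Lop_apply]
  show projz K E (MonoidAlgebra.single m 1 * MonoidAlgebra.single m' c) = _
  rw [MonoidAlgebra.single_mul_single, one_mul]

end
end DirGraph
namespace DirGraph
noncomputable section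
open scoped Classical

variable {K : Type} [Field K] {E : DirGraph}

/-- Relations in the path algebra `PA`. -/
lemma vtx_mul_vtx_self (u : E.V) : E.vtx K u * E.vtx K u = E.vtx K u := by
  rw [vtx, ← map_mul]
  exact RingQuot.mkAlgHom_rel K (PathRel.vv_eq u)

lemma vtx_mul_vtx_ne {u v : E.V} (h : u ≠ v) : E.vtx K u * E.vtx K v = 0 := by
  rw [vtx, vtx, ← map_mul]
  rw [show (0 : E.PA K) = RingQuot.mkAlgHom K (E.PathRel K) 0 from (map_zero _).symm]
  exact RingQuot.mkAlgHom_rel K (PathRel.vv_ne u v h)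

lemma vtx_mul_edg_self (e : E.Edge) : E.vtx K (E.s e) * E.edg K e = E.edg K e := by
  rw [vtx, edg, ← map_mul]
  exact RingQuot.mkAlgHom_rel K (PathRel.ve_eq e)

lemma vtx_mul_edg_ne {u : E.V} {e : E.Edge} (h : E.s e ≠ u) : E.vtx K u * E.edg K e = 0 := by
  rw [vtx, edg, ← map_mul]
  rw [show (0 : E.PA K) = RingQuot.mkAlgHom K (E.PathRel K) 0 from (map_zero _).symm]
  exact RingQuot.mkAlgHom_rel K (PathRel.ve_ne u e h)

lemma edg_mul_vtx_self (e : E.Edge) : E.edg K e * E.vtx K (E.r e) = E.edg K e := by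
  rw [vtx, edg, ← map_mul]
  exact RingQuot.mkAlgHom_rel K (PathRel.ev_eq e)

lemma edg_mul_vtx_ne {u : E.V} {e : E.Edge} (h : E.r e ≠ u) : E.edg K e * E.vtx K u = 0 := by
  rw [vtx, edg, ← map_mul]
  rw [show (0 : E.PA K) = RingQuot.mkAlgHom K (E.PathRel K) 0 from (map_zero _).symm]
  exact RingQuot.mkAlgHom_rel K (PathRel.ev_ne e u h)

@[simp] lemma dst_nil (u : E.V) : E.dst u [] = u := rfl
@[simp] lemma dst_cons (u : E.V) (e : E.Edge) (l : List E.Edge) :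
    E.dst u (e :: l) = E.dst (E.r e) l := rfl

lemma pathElem_def (u : E.V) (l : List E.Edge) :
    E.pathElem K u l = E.vtx K u * (l.map (E.edg K)).prod := rfl

lemma pathElem_nil (u : E.V) : E.pathElem K u [] = E.vtx K u := by
  rw [pathElem_def, List.map_nil, List.prod_nil, mul_one]

lemma pathElem_cons (u : E.V) (e : E.Edge) (l : List E.Edge) :
    E.pathElem K u (e :: l) = E.vtx K u * (E.edg K e * E.pathElem K (E.r e) l) := by
  rw [pathElem_def, pathElem_def, List.map_cons, List.prod_cons,
    ← mul_assoc (E.edg K e), edg_mul_vtx_self]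

lemma pathElem_cons_of {u : E.V} {e : E.Edge} (h : E.s e = u) (l : List E.Edge) :
    E.pathElem K u (e :: l) = E.edg K e * E.pathElem K (E.r e) l := by
  rw [pathElem_cons, ← mul_assoc, ← h, vtx_mul_edg_self]

variable (K)

/-- The path algebra element of a path. -/
def PAel (p : E.Pth) : E.PA K := E.pathElem K p.src p.edges

variable {K}

lemma PAel_triv (u : E.V) : PAel K (Pth.triv u : E.Pth) = E.vtx K u := pathElem_nil u

lemma PAel_sgl (e : E.Edge) : PAel K (Pth.sgl e : E.Pth) = E.edg K e := by
  show E.pathElem K (E.s e) [e] = E.edg K e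
  rw [pathElem_cons_of rfl, pathElem_nil, edg_mul_vtx_self]

lemma vtx_mul_pathElem {u v : E.V} (l : List E.Edge) :
    E.vtx K u * E.pathElem K v l = if v = u then E.pathElem K v l else 0 := by
  rw [pathElem_def, ← mul_assoc]
  by_cases h : v = u
  · subst h; rw [if_pos rfl, vtx_mul_vtx_self]
  · rw [if_neg h, vtx_mul_vtx_ne (Ne.symm h), zero_mul]

lemma pathElem_mul (l : List E.Edge) : ∀ u, E.Ok u l → ∀ q : E.Pth,
    E.pathElem K u l * PAel K q = if E.dst u l = q.src then E.pathElem K u (l ++ q.edges) else 0 := by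
  induction l with
  | nil =>
      intro u _ q
      rw [pathElem_nil, PAel, vtx_mul_pathElem, dst_nil]
      by_cases h : q.src = u
      · subst h; rw [if_pos rfl, if_pos rfl, List.nil_append]
      · rw [if_neg h, if_neg (Ne.symm h)]
  | cons e l ih =>
      intro u hok q
      rcases hok with ⟨he, hok⟩
      rw [pathElem_cons_of he, mul_assoc, ih _ hok q, dst_cons]
      by_cases h : E.dst (E.r e) l = q.src
      · rw [if_pos h, if_pos h, ← pathElem_cons_of he, List.cons_append]
      · rw [if_neg h, if_neg h, mul_zero]

lemma PAel_mul (p q : E.Pth) :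
    PAel K p * PAel K q =
      if h : p.tgt = q.src then PAel K (p.comp q h) else 0 := by
  have hd : p.tgt = E.dst p.src p.edges := rfl
  by_cases h : p.tgt = q.src
  · rw [dif_pos h, PAel, pathElem_mul p.edges p.src p.ok q, if_pos (hd ▸ h)]
    rfl
  · rw [dif_neg h, PAel, pathElem_mul p.edges p.src p.ok q, if_neg (hd ▸ h)]

lemma vtx_mem_KE (u : E.V) : E.vtx K u ∈ E.KE K :=
  NonUnitalAlgebra.subset_adjoin K (Or.inl ⟨u, rfl⟩)

lemma edg_mem_KE (e : E.Edge) : E.edg K e ∈ E.KE K :=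
  NonUnitalAlgebra.subset_adjoin K (Or.inr ⟨e, rfl⟩)

variable (K E)

/-- The span of the paths inside `PA`. -/
def PSpan : Submodule K (E.PA K) := Submodule.span K (Set.range (PAel K (E := E)))

variable {K E}

lemma PAel_mem_PSpan (p : E.Pth) : PAel K p ∈ PSpan K E :=
  Submodule.subset_span ⟨p, rfl⟩

lemma mul_mem_PSpan {x y : E.PA K} (hx : x ∈ PSpan K E) (hy : y ∈ PSpan K E) :
    x * y ∈ PSpan K E := by
  have key : ∀ p q : E.Pth, PAel K p * PAel K q ∈ PSpan K E := by
    intro p q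
    rw [PAel_mul]
    by_cases h : p.tgt = q.src
    · rw [dif_pos h]; exact PAel_mem_PSpan _
    · rw [dif_neg h]; exact zero_mem _
  induction hx using Submodule.span_induction with
  | mem a ha =>
      rcases ha with ⟨p, rfl⟩
      induction hy using Submodule.span_induction with
      | mem b hb => rcases hb with ⟨q, rfl⟩; exact key p q
      | zero => rw [mul_zero]; exact zero_mem _
      | add y z _ _ h1 h2 => rw [mul_add]; exact add_mem h1 h2
      | smul c y _ h1 => rw [mul_smul_comm]; exact Submodule.smul_mem _ _ h1
  | zero => rw [zero_mul]; exact zero_mem _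
  | add y z _ _ h1 h2 => rw [add_mul]; exact add_mem h1 h2
  | smul c y _ h1 => rw [smul_mul_assoc]; exact Submodule.smul_mem _ _ h1

lemma KE_le_PSpan {z : E.PA K} (hz : z ∈ E.KE K) : z ∈ PSpan K E := by
  have : E.KE K ≤ (PSpan K E).toNonUnitalSubalgebra (fun x y hx hy => mul_mem_PSpan hx hy) := by
    apply NonUnitalAlgebra.adjoin_le
    rintro x (⟨u, rfl⟩ | ⟨e, rfl⟩)
    · show E.vtx K u ∈ PSpan K E
      rw [← PAel_triv]; exact PAel_mem_PSpan _
    · show E.edg K e ∈ PSpan K E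
      rw [← PAel_sgl]; exact PAel_mem_PSpan _
  exact this hz

variable (K E)

/-- Coefficients of an element of the path algebra. -/
def coeff (z : E.PA K) : A0 K E := rho K E z (MonoidAlgebra.single 1 1)

variable {K E}

lemma coeff_add (x y : E.PA K) : coeff K E (x + y) = coeff K E x + coeff K E y := by
  rw [coeff, coeff, coeff, map_add]; rfl

lemma coeff_smul (c : K) (x : E.PA K) : coeff K E (c • x) = c • coeff K E x := by
  rw [coeff, coeff, map_smul]; rfl

lemma coeff_zero : coeff K E (0 : E.PA K) = 0 := by
  rw [coeff, map_zero]; rfl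

lemma Lop_projz (m : PMon E) (f : A0 K E) :
    Lop K E m (projz K E f) = Lop K E m f := by
  rw [Lop_apply, Lop_apply, projz_mul_projz]

lemma rho_pathElem (l : List E.Edge) : ∀ u (h : E.Ok u l) (m : PMon E) (c : K),
    rho K E (E.pathElem K u l) (MonoidAlgebra.single m c) =
      projz K E (MonoidAlgebra.single ((.pth ⟨(u, l), h⟩ : PMon E) * m) c) := by
  induction l with
  | nil =>
      intro u h m c
      rw [pathElem_nil, rho_vtx, Lop_single]
      rfl
  | cons e l ih =>
      intro u h m c
      have hcmp : (PMon.pth (Pth.sgl e) : PMon E) * .pth ⟨(E.r e, l), h.2⟩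
          = .pth ⟨(u, e :: l), h⟩ := by
        refine (PMon.pth_mul_pth_of _ _ rfl).trans ?_
        exact congrArg PMon.pth (Pth.ext h.1 rfl)
      rw [pathElem_cons_of h.1, map_mul, Module.End.mul_apply, ih _ h.2 m c, rho_edg,
        Lop_projz, Lop_single, ← mul_assoc, hcmp]

lemma rho_PAel (p : E.Pth) (m : PMon E) (c : K) :
    rho K E (PAel K p) (MonoidAlgebra.single m c) =
      projz K E (MonoidAlgebra.single ((.pth p : PMon E) * m) c) := by
  rw [PAel, rho_pathElem p.edges p.src p.ok m c]
  have : (⟨(p.src, p.edges), p.ok⟩ : E.Pth) = p := Pth.ext rfl rfl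
  rw [this]

lemma PMon.pth_ne_zero (p : E.Pth) : (.pth p : PMon E) ≠ .zero := fun h => by cases h

lemma coeff_PAel (p : E.Pth) :
    coeff K E (PAel K p) = MonoidAlgebra.single (.pth p : PMon E) 1 := by
  rw [coeff, rho_PAel, mul_one, projz_single_ne (PMon.pth_ne_zero p)]

/-- Right multiplication formula. -/
lemma rho_single_pth {z : E.PA K} (hz : z ∈ PSpan K E) (t : E.Pth) :
    rho K E z (MonoidAlgebra.single (.pth t : PMon E) 1) =
      projz K E (coeff K E z * MonoidAlgebra.single (.pth t : PMon E) 1) := by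
  induction hz using Submodule.span_induction with
  | mem a ha =>
      rcases ha with ⟨q, rfl⟩
      rw [rho_PAel, coeff_PAel, MonoidAlgebra.single_mul_single, one_mul]
  | zero => rw [map_zero, coeff_zero, zero_mul, map_zero]; rfl
  | add y z _ _ h1 h2 =>
      rw [map_add, LinearMap.add_apply, h1, h2, coeff_add, add_mul, map_add]
  | smul c y _ h1 =>
      rw [map_smul, LinearMap.smul_apply, h1, coeff_smul, smul_mul_assoc, map_smul]

end
end DirGraph
namespace DirGraph
noncomputable section
open scoped Classical

variable {K : Type} [Field K] {E : DirGraph}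

variable (K)

/-- Lift a coefficient family on paths to the model algebra. -/
def dlift (d : E.Pth →₀ K) : A0 K E := d.sum fun p c => MonoidAlgebra.single (.pth p) c

variable {K}

lemma dlift_apply_pth (d : E.Pth →₀ K) (p : E.Pth) :
    dlift K d (.pth p) = d p := by
  rw [dlift, MonoidAlgebra.coeff_finsuppSum, Finsupp.sum_apply, Finsupp.sum_eq_single p]
  · rw [MonoidAlgebra.coeff_single, Finsupp.single_eq_same]
  · intro q _ hq
    exact Finsupp.single_eq_of_ne (fun hh => hq (by cases hh; rfl))
  · intro _; rw [MonoidAlgebra.single_zero]; rfl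

lemma dlift_apply_one (d : E.Pth →₀ K) : dlift K d .one = 0 := by
  rw [dlift, MonoidAlgebra.coeff_finsuppSum, Finsupp.sum_apply]
  apply fsum_eq_zero
  intro q _
  exact Finsupp.single_eq_of_ne (fun hh => by cases hh)

lemma dlift_apply_zero (d : E.Pth →₀ K) : dlift K d .zero = 0 := by
  rw [dlift, MonoidAlgebra.coeff_finsuppSum, Finsupp.sum_apply]
  apply fsum_eq_zero
  intro q _
  exact Finsupp.single_eq_of_ne (fun hh => by cases hh)

lemma coeff_rep {z : E.PA K} (hz : z ∈ PSpan K E) :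
    ∃ d : E.Pth →₀ K, z = (d.sum fun p c => c • PAel K p) ∧ coeff K E z = dlift K d := by
  rw [PSpan] at hz
  rw [Finsupp.mem_span_range_iff_exists_finsupp] at hz
  obtain ⟨d, hd⟩ := hz
  refine ⟨d, hd.symm, ?_⟩
  rw [← hd]
  have : coeff K E (d.sum fun p c => c • PAel K p)
      = d.sum fun p c => coeff K E (c • PAel K p) := by
    classical
    refine Finsupp.induction d (by rw [Finsupp.sum_zero_index, Finsupp.sum_zero_index, coeff_zero]) ?_
    intro p c f hpf hc ih
    rw [Finsupp.sum_add_index, Finsupp.sum_add_index, coeff_add, ih,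
      Finsupp.sum_single_index, Finsupp.sum_single_index]
    · rw [zero_smul, coeff_zero]
    · rw [zero_smul]
    · intro a _; rw [zero_smul, coeff_zero]
    · intro a _ c1 c2; rw [add_smul, coeff_add]
    · intro a _; rw [zero_smul]
    · intro a _ c1 c2; rw [add_smul]
  rw [this, dlift]
  apply Finsupp.sum_congr
  intro p _
  rw [coeff_smul, coeff_PAel, MonoidAlgebra.smul_single, smul_eq_mul, mul_one]

lemma coeff_eq_zero_imp {z : E.PA K} (hz : z ∈ PSpan K E) (h0 : coeff K E z = 0) : z = 0 := by
  obtain ⟨d, hzd, hcd⟩ := coeff_rep hz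
  have hd0 : d = 0 := by
    ext q
    have := congrArg (fun f : A0 K E => f (.pth q : PMon E)) (hcd.symm.trans h0)
    simpa [dlift_apply_pth] using this
  rw [hzd, hd0, Finsupp.sum_zero_index]

lemma coeff_inj {z1 z2 : E.PA K} (h1 : z1 ∈ PSpan K E) (h2 : z2 ∈ PSpan K E)
    (h : coeff K E z1 = coeff K E z2) : z1 = z2 := by
  have hsub : z1 - z2 ∈ PSpan K E := sub_mem h1 h2
  have key : coeff K E (z1 - z2) + coeff K E z2 = coeff K E z1 := by
    rw [← coeff_add, sub_add_cancel]
  rw [h] at key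
  have h0 : coeff K E (z1 - z2) = 0 := by
    have := congrArg (fun w => w - coeff K E z2) key
    simpa using this
  exact sub_eq_zero.mp (coeff_eq_zero_imp hsub h0)

/-- The centrality equation in the model, for a generator path `t`. -/
lemma central_eqn {z : E.PA K} (hzKE : z ∈ E.KE K)
    (hcom : ∀ a ∈ E.KE K, a * z = z * a) (t : E.Pth) (a : E.PA K) (haKE : a ∈ E.KE K)
    (hra : rho K E a = Lop K E (.pth t)) :
    projz K E (MonoidAlgebra.single (.pth t : PMon E) 1 * coeff K E z) =
      projz K E (coeff K E z * MonoidAlgebra.single (.pth t : PMon E) 1) := by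
  have hzPS := KE_le_PSpan hzKE
  have h1 : coeff K E (a * z) =
      projz K E (MonoidAlgebra.single (.pth t : PMon E) 1 * coeff K E z) := by
    rw [coeff, map_mul, Module.End.mul_apply, hra, Lop_apply]; rfl
  have h2 : coeff K E (z * a) =
      projz K E (coeff K E z * MonoidAlgebra.single (.pth t : PMon E) 1) := by
    rw [coeff, map_mul, Module.End.mul_apply, hra]
    have : Lop K E (.pth t) (MonoidAlgebra.single (1 : PMon E) 1)
        = MonoidAlgebra.single (.pth t : PMon E) 1 := by
      rw [Lop_single, mul_one, projz_single_ne (PMon.pth_ne_zero t)]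
    rw [this, rho_single_pth hzPS]
  rw [← h1, ← h2, hcom a haKE]

lemma central_eqn_vtx {z : E.PA K} (hzKE : z ∈ E.KE K)
    (hcom : ∀ a ∈ E.KE K, a * z = z * a) (u : E.V) :
    projz K E (MonoidAlgebra.single (.pth (.triv u) : PMon E) 1 * coeff K E z) =
      projz K E (coeff K E z * MonoidAlgebra.single (.pth (.triv u) : PMon E) 1) :=
  central_eqn hzKE hcom (.triv u) (E.vtx K u) (vtx_mem_KE u) (rho_vtx K E u)

lemma central_eqn_edg {z : E.PA K} (hzKE : z ∈ E.KE K)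
    (hcom : ∀ a ∈ E.KE K, a * z = z * a) (e : E.Edge) :
    projz K E (MonoidAlgebra.single (.pth (.sgl e) : PMon E) 1 * coeff K E z) =
      projz K E (coeff K E z * MonoidAlgebra.single (.pth (.sgl e) : PMon E) 1) :=
  central_eqn hzKE hcom (.sgl e) (E.edg K e) (edg_mem_KE e) (rho_edg K E e)

end
end DirGraph
namespace DirGraph
noncomputable section
open scoped Classical

variable {K : Type} [Field K] {E : DirGraph}

lemma pth_mul_cases {t x : E.Pth} {b : PMon E} (h : (.pth t : PMon E) * b = .pth x) :
    (b = .one ∧ t = x) ∨ (∃ q : E.Pth, b = .pth q ∧ ∃ hc : t.tgt = q.src, t.comp q hc = x) := by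
  cases b with
  | one => exact Or.inl ⟨rfl, by rw [show (PMon.one : PMon E) = 1 from rfl, mul_one] at h; rwa [PMon.pth.injEq] at h⟩
  | zero => rw [PMon.mul_zero'] at h; cases h
  | pth q =>
      right
      rw [PMon.pth_mul_pth] at h
      by_cases hc : t.tgt = q.src
      · rw [dif_pos hc] at h
        exact ⟨q, rfl, hc, by rwa [PMon.pth.injEq] at h⟩
      · rw [dif_neg hc] at h; cases h

lemma mul_pth_cases {t x : E.Pth} {b : PMon E} (h : b * (.pth t : PMon E) = .pth x) :
    (b = .one ∧ t = x) ∨ (∃ q : E.Pth, b = .pth q ∧ ∃ hc : q.tgt = t.src, q.comp t hc = x) := by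
  cases b with
  | one => exact Or.inl ⟨rfl, by rw [show (PMon.one : PMon E) = 1 from rfl, one_mul] at h; rwa [PMon.pth.injEq] at h⟩
  | zero => rw [PMon.zero_mul'] at h; cases h
  | pth q =>
      right
      rw [PMon.pth_mul_pth] at h
      by_cases hc : q.tgt = t.src
      · rw [dif_pos hc] at h
        exact ⟨q, rfl, hc, by rwa [PMon.pth.injEq] at h⟩
      · rw [dif_neg hc] at h; cases h

lemma comp_inv {t q x : E.Pth} (hc : t.tgt = q.src) (h : t.comp q hc = x) :
    x.src = t.src ∧ x.edges = t.edges ++ q.edges := by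
  subst h; exact ⟨rfl, rfl⟩

/-- Extend a path by an edge on the left. -/
def Pth.cons (e : E.Edge) (q : E.Pth) (h : E.r e = q.src) : E.Pth :=
  (Pth.sgl e).comp q (by simpa using h)

@[simp] lemma Pth.cons_src (e : E.Edge) (q : E.Pth) (h : E.r e = q.src) :
    (Pth.cons e q h).src = E.s e := rfl
@[simp] lemma Pth.cons_edges (e : E.Edge) (q : E.Pth) (h : E.r e = q.src) :
    (Pth.cons e q h).edges = e :: q.edges := rfl

/-- Extend a path by an edge on the right. -/
def Pth.snoc (q : E.Pth) (e : E.Edge) (h : q.tgt = E.s e) : E.Pth :=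
  q.comp (Pth.sgl e) (by simpa using h)

@[simp] lemma Pth.snoc_src (q : E.Pth) (e : E.Edge) (h : q.tgt = E.s e) :
    (Pth.snoc q e h).src = q.src := rfl
@[simp] lemma Pth.snoc_edges (q : E.Pth) (e : E.Edge) (h : q.tgt = E.s e) :
    (Pth.snoc q e h).edges = q.edges ++ [e] := rfl

variable {d : E.Pth →₀ K}

lemma eval_eqn {t : E.Pth}
    (H : projz K E (MonoidAlgebra.single (.pth t : PMon E) 1 * dlift K d) =
      projz K E (dlift K d * MonoidAlgebra.single (.pth t : PMon E) 1)) (p : E.Pth) :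
    (MonoidAlgebra.single (.pth t : PMon E) (1:K) * dlift K d) (.pth p)
      = (dlift K d * MonoidAlgebra.single (.pth t : PMon E) (1:K)) (.pth p) := by
  have h1 := projz_apply_ne (MonoidAlgebra.single (.pth t : PMon E) 1 * dlift K d)
    (PMon.pth_ne_zero p)
  have h2 := projz_apply_ne (dlift K d * MonoidAlgebra.single (.pth t : PMon E) 1)
    (PMon.pth_ne_zero p)
  rw [← h1, ← h2, H]

/-- Every path supporting a central element is closed. -/
lemma extract_closed
    (Hv : ∀ u : E.V, projz K E (MonoidAlgebra.single (.pth (.triv u) : PMon E) 1 * dlift K d) =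
      projz K E (dlift K d * MonoidAlgebra.single (.pth (.triv u) : PMon E) 1))
    (p : E.Pth) (hdp : d p ≠ 0) : p.tgt = p.src := by
  by_contra hc
  have Heq := eval_eqn (Hv p.src) p
  have hL : (MonoidAlgebra.single (.pth (.triv p.src) : PMon E) (1:K) * dlift K d) (.pth p)
      = 1 * dlift K d (.pth p) := by
    apply single_mul_apply_of _ _ _ _ (.pth p)
    · rw [PMon.pth_mul_pth_of _ _ (by simp)]
      exact congrArg PMon.pth (Pth.ext rfl rfl)
    · intro b hb
      rcases pth_mul_cases hb with ⟨hb1, _⟩ | ⟨q, rfl, hcq, hcomp⟩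
      · right; rw [hb1]; exact dlift_apply_one d
      · left
        rcases comp_inv hcq hcomp with ⟨h1, h2⟩
        exact congrArg PMon.pth (Pth.ext (by simpa using hcq.symm) (by simpa using h2.symm))
  have hR : (dlift K d * MonoidAlgebra.single (.pth (.triv p.src) : PMon E) (1:K)) (.pth p) = 0 := by
    apply mul_single_apply_zero
    intro b hb
    rcases mul_pth_cases hb with ⟨hb1, _⟩ | ⟨q, rfl, hcq, hcomp⟩
    · rw [hb1]; exact dlift_apply_one d
    · exfalso
      rcases comp_inv hcq hcomp with ⟨h1, h2⟩
      have hq : q = p := Pth.ext h1.symm (by simpa using h2.symm)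
      subst hq
      exact hc (by simpa using hcq)
  rw [hL, hR, one_mul, dlift_apply_pth] at Heq
  exact hdp Heq

/-- Coefficient propagation along an edge for trivial paths. -/
lemma extract_triv
    (He : ∀ e : E.Edge, projz K E (MonoidAlgebra.single (.pth (.sgl e) : PMon E) 1 * dlift K d) =
      projz K E (dlift K d * MonoidAlgebra.single (.pth (.sgl e) : PMon E) 1))
    (e : E.Edge) : d (.triv (E.r e)) = d (.triv (E.s e)) := by
  have Heq := eval_eqn (He e) (.sgl e)
  have hL : (MonoidAlgebra.single (.pth (.sgl e) : PMon E) (1:K) * dlift K d) (.pth (.sgl e))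
      = 1 * dlift K d (.pth (.triv (E.r e))) := by
    apply single_mul_apply_of _ _ _ _ (.pth (.triv (E.r e)))
    · exact PMon.sgl_mul_triv_self e
    · intro b hb
      rcases pth_mul_cases hb with ⟨hb1, _⟩ | ⟨q, rfl, hcq, hcomp⟩
      · right; rw [hb1]; exact dlift_apply_one d
      · left
        rcases comp_inv hcq hcomp with ⟨h1, h2⟩
        have hqe : q.edges = [] := by simpa using h2.symm
        exact congrArg PMon.pth (Pth.ext (by simpa using hcq.symm) (by simp [hqe]))
  have hR : (dlift K d * MonoidAlgebra.single (.pth (.sgl e) : PMon E) (1:K)) (.pth (.sgl e))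
      = dlift K d (.pth (.triv (E.s e))) * 1 := by
    apply mul_single_apply_of _ _ _ _ (.pth (.triv (E.s e)))
    · exact PMon.triv_mul_sgl_self e
    · intro b hb
      rcases mul_pth_cases hb with ⟨hb1, _⟩ | ⟨q, rfl, hcq, hcomp⟩
      · right; rw [hb1]; exact dlift_apply_one d
      · left
        rcases comp_inv hcq hcomp with ⟨h1, h2⟩
        have hqe : q.edges = [] := by
          have h3 : q.edges ++ [e] = [e] := by simpa using h2.symm
          cases hqq : q.edges with
          | nil => rfl
          | cons a t => rw [hqq] at h3; simp at h3
        exact congrArg PMon.pth (Pth.ext (by simpa using h1.symm) (by simp [hqe]))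
  rw [hL, hR, one_mul, mul_one, dlift_apply_pth, dlift_apply_pth] at Heq
  exact Heq

/-- Backward rotation: a supported path into `r e` must end with `e`. -/
lemma extract_rot_back
    (He : ∀ e : E.Edge, projz K E (MonoidAlgebra.single (.pth (.sgl e) : PMon E) 1 * dlift K d) =
      projz K E (dlift K d * MonoidAlgebra.single (.pth (.sgl e) : PMon E) 1))
    {e : E.Edge} {q : E.Pth} (hq : E.r e = q.src) (hne : q.edges ≠ []) (hdq : d q ≠ 0) :
    ∃ (l' : List E.Edge) (h' : E.Ok (E.s e) (e :: l')),
      q.edges = l' ++ [e] ∧ d ⟨(E.s e, e :: l'), h'⟩ = d q := by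
  have Heq := eval_eqn (He e) (Pth.cons e q hq)
  have hL : (MonoidAlgebra.single (.pth (.sgl e) : PMon E) (1:K) * dlift K d)
      (.pth (Pth.cons e q hq)) = 1 * dlift K d (.pth q) := by
    apply single_mul_apply_of _ _ _ _ (.pth q)
    · rw [PMon.pth_mul_pth_of _ _ (by simpa using hq)]
      rfl
    · intro b hb
      rcases pth_mul_cases hb with ⟨hb1, _⟩ | ⟨w, rfl, hcw, hcomp⟩
      · right; rw [hb1]; exact dlift_apply_one d
      · left
        rcases comp_inv hcw hcomp with ⟨h1, h2⟩
        have hwe : q.edges = w.edges := by simpa using h2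
        exact congrArg PMon.pth (Pth.ext ((by simpa using hcw.symm : w.src = E.r e).trans hq) hwe.symm)
  -- now split on whether q.edges ends with e
  by_cases hex : ∃ l' : List E.Edge, q.edges = l' ++ [e]
  · obtain ⟨l', hl⟩ := hex
    have hokx : E.Ok (E.s e) ((e :: l') ++ [e]) := by
      have := (Pth.cons e q hq).ok
      rw [show (Pth.cons e q hq).edges = e :: q.edges from rfl] at this
      · rw [show ((e :: l') ++ [e]) = e :: q.edges by simp [hl]]
        exact this
    have h' : E.Ok (E.s e) (e :: l') := (ok_append_iff.mp hokx).1
    refine ⟨l', h', hl, ?_⟩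
    set w : E.Pth := ⟨(E.s e, e :: l'), h'⟩ with hwdef
    have hwt : w.tgt = E.s e := by
      have h2 := (ok_append_iff.mp hokx).2
      rcases h2 with ⟨hse, -⟩
      exact hse.symm
    have hR : (dlift K d * MonoidAlgebra.single (.pth (.sgl e) : PMon E) (1:K))
        (.pth (Pth.cons e q hq)) = dlift K d (.pth w) * 1 := by
      apply mul_single_apply_of _ _ _ _ (.pth w)
      · rw [PMon.pth_mul_pth_of _ _ (by simpa using hwt)]
        refine congrArg PMon.pth (Pth.ext rfl ?_)
        show w.edges ++ [e] = e :: q.edges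
        rw [hwdef]
        simp [hl]
      · intro b hb
        rcases mul_pth_cases hb with ⟨hb1, _⟩ | ⟨w', rfl, hcw, hcomp⟩
        · right; rw [hb1]; exact dlift_apply_one d
        · left
          rcases comp_inv hcw hcomp with ⟨h1, h2⟩
          have hsrc : w'.src = E.s e := by simpa using h1.symm
          have hedg : w'.edges = e :: l' := by
            have h3 : w'.edges ++ [e] = (e :: l') ++ [e] := by
              have : w'.edges ++ [e] = e :: q.edges := by simpa using h2.symm
              rw [this]; simp [hl]
            exact List.append_cancel_right h3
          exact congrArg PMon.pth (Pth.ext (by simp [hwdef, hsrc]) (by simp [hwdef, hedg]))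
    rw [hL, hR, one_mul, mul_one, dlift_apply_pth, dlift_apply_pth] at Heq
    exact Heq.symm
  · exfalso
    have hR0 : (dlift K d * MonoidAlgebra.single (.pth (.sgl e) : PMon E) (1:K))
        (.pth (Pth.cons e q hq)) = 0 := by
      apply mul_single_apply_zero
      intro b hb
      rcases mul_pth_cases hb with ⟨hb1, _⟩ | ⟨w', rfl, hcw, hcomp⟩
      · rw [hb1]; exact dlift_apply_one d
      · exfalso
        rcases comp_inv hcw hcomp with ⟨h1, h2⟩
        have h3 : w'.edges ++ [e] = e :: q.edges := by simpa using h2.symm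
        cases hwe : w'.edges with
        | nil => rw [hwe] at h3; simp at h3; exact hne h3
        | cons a t =>
            rw [hwe] at h3
            have : a = e ∧ t ++ [e] = q.edges := by
              rw [List.cons_append] at h3
              exact ⟨(List.cons.injEq _ _ _ _ ▸ h3).1, (List.cons.injEq _ _ _ _ ▸ h3).2⟩
            exact hex ⟨t, this.2.symm⟩
    rw [hL, hR0, one_mul, dlift_apply_pth] at Heq
    exact hdq Heq


/-- Forward rotation: a supported closed path based at `s e` must start with `e`. -/
lemma extract_rot_fwd
    (He : ∀ e : E.Edge, projz K E (MonoidAlgebra.single (.pth (.sgl e) : PMon E) 1 * dlift K d) =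
      projz K E (dlift K d * MonoidAlgebra.single (.pth (.sgl e) : PMon E) 1))
    {e : E.Edge} {q : E.Pth} (hsrc : q.src = E.s e) (htgt : q.tgt = E.s e)
    (hne : q.edges ≠ []) (hdq : d q ≠ 0) :
    ∃ (t : List E.Edge) (h' : E.Ok (E.r e) (t ++ [e])),
      q.edges = e :: t ∧ d ⟨(E.r e, t ++ [e]), h'⟩ = d q := by
  have Heq := eval_eqn (He e) (Pth.snoc q e htgt)
  have hR : (dlift K d * MonoidAlgebra.single (.pth (.sgl e) : PMon E) (1:K))
      (.pth (Pth.snoc q e htgt)) = dlift K d (.pth q) * 1 := by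
    apply mul_single_apply_of _ _ _ _ (.pth q)
    · rw [PMon.pth_mul_pth_of _ _ (by simpa using htgt)]
      rfl
    · intro b hb
      rcases mul_pth_cases hb with ⟨hb1, _⟩ | ⟨w, rfl, hcw, hcomp⟩
      · right; rw [hb1]; exact dlift_apply_one d
      · left
        rcases comp_inv hcw hcomp with ⟨h1, h2⟩
        have hws : w.src = q.src := by simpa using h1.symm
        have hwe : w.edges = q.edges := by
          have h3 : w.edges ++ [e] = q.edges ++ [e] := by simpa using h2.symm
          exact List.append_cancel_right h3
        exact congrArg PMon.pth (Pth.ext hws hwe)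
  by_cases hex : ∃ t : List E.Edge, q.edges = e :: t
  · obtain ⟨t, hl⟩ := hex
    have hokx : E.Ok q.src (e :: (t ++ [e])) := by
      have := (Pth.snoc q e htgt).ok
      rw [show (Pth.snoc q e htgt).edges = q.edges ++ [e] from rfl] at this
      rw [show e :: (t ++ [e]) = q.edges ++ [e] by simp [hl]]
      exact this
    have h' : E.Ok (E.r e) (t ++ [e]) := (ok_cons.mp hokx).2
    refine ⟨t, h', hl, ?_⟩
    set w : E.Pth := ⟨(E.r e, t ++ [e]), h'⟩ with hwdef
    have hL : (MonoidAlgebra.single (.pth (.sgl e) : PMon E) (1:K) * dlift K d)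
        (.pth (Pth.snoc q e htgt)) = 1 * dlift K d (.pth w) := by
      apply single_mul_apply_of _ _ _ _ (.pth w)
      · rw [PMon.pth_mul_pth_of _ _ (by simp [hwdef])]
        refine congrArg PMon.pth (Pth.ext hsrc.symm ?_)
        show e :: w.edges = q.edges ++ [e]
        rw [hwdef]
        simp [hl]
      · intro b hb
        rcases pth_mul_cases hb with ⟨hb1, _⟩ | ⟨w', rfl, hcw, hcomp⟩
        · right; rw [hb1]; exact dlift_apply_one d
        · left
          rcases comp_inv hcw hcomp with ⟨h1, h2⟩
          have hsrc' : w'.src = E.r e := by simpa using hcw.symm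
          have hedg : w'.edges = t ++ [e] := by
            have h3 : e :: w'.edges = q.edges ++ [e] := by simpa using h2.symm
            rw [hl, List.cons_append] at h3
            exact ((List.cons.injEq _ _ _ _ ▸ h3) : e = e ∧ _).2
          exact congrArg PMon.pth (Pth.ext (by simp [hwdef, hsrc']) (by simp [hwdef, hedg]))
    rw [hL, hR, one_mul, mul_one, dlift_apply_pth, dlift_apply_pth] at Heq
    exact Heq
  · exfalso
    have hL0 : (MonoidAlgebra.single (.pth (.sgl e) : PMon E) (1:K) * dlift K d)
        (.pth (Pth.snoc q e htgt)) = 0 := by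
      apply single_mul_apply_zero
      intro b hb
      rcases pth_mul_cases hb with ⟨hb1, _⟩ | ⟨w', rfl, hcw, hcomp⟩
      · rw [hb1]; exact dlift_apply_one d
      · exfalso
        rcases comp_inv hcw hcomp with ⟨h1, h2⟩
        have h3 : e :: w'.edges = q.edges ++ [e] := by simpa using h2.symm
        cases hqe : q.edges with
        | nil => exact hne hqe
        | cons a tl =>
            rw [hqe, List.cons_append] at h3
            have ha : e = a := ((List.cons.injEq _ _ _ _ ▸ h3) : e = a ∧ _).1
            exact hex ⟨tl, by rw [hqe, ← ha]⟩
    rw [hL0, hR, mul_one, dlift_apply_pth] at Heq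
    exact hdq Heq.symm

end
end DirGraph
namespace DirGraph
noncomputable section
open scoped Classical

variable {K : Type} [Field K] {E : DirGraph}

lemma caseA {z : E.PA K} {d : E.Pth →₀ K}
    (hconn : E.IsConnectedGraph)
    (hzd : z = d.sum fun p c => c • PAel K p)
    (He : ∀ e : E.Edge, projz K E (MonoidAlgebra.single (.pth (.sgl e) : PMon E) 1 * dlift K d) =
      projz K E (dlift K d * MonoidAlgebra.single (.pth (.sgl e) : PMon E) 1))
    (hd0 : d ≠ 0)
    (htriv : ∀ p : E.Pth, d p ≠ 0 → p.edges = []) :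
    z ∈ E.scalarSet K := by
  have hstep : ∀ u v : E.V, E.Step u v → d (.triv u) = d (.triv v) := by
    rintro u v (⟨e, hs, hr⟩ | ⟨e, hs, hr⟩)
    · rw [← hs, ← hr]; exact (extract_triv He e).symm
    · rw [← hs, ← hr]; exact extract_triv He e
  have hall : ∀ u v : E.V, d (.triv u) = d (.triv v) := by
    intro u v
    induction hconn u v with
    | refl => rfl
    | tail _ hbc ih => exact ih.trans (hstep _ _ hbc)
  obtain ⟨p0, hdp0⟩ : ∃ p, d p ≠ 0 := by
    by_contra h
    push_neg at h
    exact hd0 (Finsupp.ext fun p => h p)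
  have hp0 : p0 = Pth.triv p0.src := Pth.ext rfl (htriv p0 hdp0)
  set k : K := d (.triv p0.src) with hk
  have hkne : k ≠ 0 := by rw [hk, ← hp0]; exact hdp0
  have hvalk : ∀ u : E.V, d (.triv u) = k := fun u => hall u p0.src
  have hfin : Finite E.V := by
    apply Finite.of_injective (fun u : E.V =>
      (⟨Pth.triv u, Finsupp.mem_support_iff.mpr (by rw [hvalk u]; exact hkne)⟩ : d.support))
    intro u v h
    have := congrArg (fun q => Pth.src q.1) h
    simpa using this
  have : Fintype E.V := Fintype.ofFinite E.V
  have hsupp : d.support = Finset.univ.image (fun u : E.V => Pth.triv u) := by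
    ext q
    constructor
    · intro hq
      have hdq := Finsupp.mem_support_iff.mp hq
      have : q = Pth.triv q.src := Pth.ext rfl (htriv q hdq)
      rw [this]
      exact Finset.mem_image.mpr ⟨q.src, Finset.mem_univ _, rfl⟩
    · intro hq
      rcases Finset.mem_image.mp hq with ⟨u, _, rfl⟩
      exact Finsupp.mem_support_iff.mpr (by rw [hvalk u]; exact hkne)
  have hunit : E.unitKE K = ∑ u : E.V, E.vtx K u := by
    rw [unitKE, finsum_eq_sum_of_fintype]
  refine ⟨k, ?_⟩
  show k • E.unitKE K = z
  rw [hunit, hzd, Finsupp.sum, hsupp,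
    Finset.sum_image (fun u _ v _ h => by have := congrArg Pth.src h; simpa using this), Finset.smul_sum]
  exact Finset.sum_congr rfl fun u _ => by rw [hvalk u, PAel_triv]

lemma caseB
    (hconn : E.IsConnectedGraph) {d : E.Pth →₀ K}
    (Hv : ∀ u : E.V, projz K E (MonoidAlgebra.single (.pth (.triv u) : PMon E) 1 * dlift K d) =
      projz K E (dlift K d * MonoidAlgebra.single (.pth (.triv u) : PMon E) 1))
    (He : ∀ e : E.Edge, projz K E (MonoidAlgebra.single (.pth (.sgl e) : PMon E) 1 * dlift K d) =
      projz K E (dlift K d * MonoidAlgebra.single (.pth (.sgl e) : PMon E) 1))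
    {p0 : E.Pth} (hdp0 : d p0 ≠ 0) (hp0ne : p0.edges ≠ []) :
    E.IsCycleGraph := by
  have F1 : ∀ p : E.Pth, d p ≠ 0 → p.tgt = p.src := extract_closed Hv
  set P : E.V → Prop := fun v => ∃ p : E.Pth, d p ≠ 0 ∧ p.edges ≠ [] ∧ p.src = v with hP
  have hP0 : P p0.src := ⟨p0, hdp0, hp0ne, rfl⟩
  have hPin : ∀ v, P v → ∀ e : E.Edge, E.r e = v → P (E.s e) := by
    rintro v ⟨p, hdp, hpne, hps⟩ e hre
    obtain ⟨l', h', hl, hdw⟩ := extract_rot_back He (hre.trans hps.symm) hpne hdp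
    exact ⟨⟨(E.s e, e :: l'), h'⟩, by rw [hdw]; exact hdp, by simp, by simp⟩
  have hPout : ∀ v, P v → ∀ e : E.Edge, E.s e = v → P (E.r e) := by
    rintro v ⟨p, hdp, hpne, hps⟩ e hse
    obtain ⟨t, h', hl, hdw⟩ := extract_rot_fwd He (hps.trans hse.symm)
      ((F1 p hdp).trans (hps.trans hse.symm)) hpne hdp
    exact ⟨⟨(E.r e, t ++ [e]), h'⟩, by rw [hdw]; exact hdp, by simp, by simp⟩
  have hPall : ∀ v, P v := by
    intro v
    have hcv := hconn p0.src v
    induction hcv with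
    | refl => exact hP0
    | tail _ hbc ih =>
        rcases hbc with ⟨e, hs, hr⟩ | ⟨e, hs, hr⟩
        · rw [← hr]; exact hPout _ ih e hs
        · rw [← hs]; exact hPin _ ih e hr
  -- uniqueness of out-edges
  have hout_u : ∀ e e' : E.Edge, E.s e = E.s e' → e = e' := by
    intro e e' hss
    obtain ⟨p, hdp, hpne, hps⟩ := hPall (E.s e)
    obtain ⟨t, h', hl, _⟩ := extract_rot_fwd He hps
      ((F1 p hdp).trans hps) hpne hdp
    obtain ⟨t2, h2', hl2, _⟩ := extract_rot_fwd He (hps.trans hss)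
      (((F1 p hdp).trans hps).trans hss) hpne hdp
    rw [hl] at hl2
    exact (List.cons.injEq _ _ _ _ ▸ hl2).1
  -- uniqueness of in-edges
  have hin_u : ∀ e e' : E.Edge, E.r e = E.r e' → e = e' := by
    intro e e' hrr
    obtain ⟨p, hdp, hpne, hps⟩ := hPall (E.r e)
    obtain ⟨l1, h1', hl1, _⟩ := extract_rot_back He (hps.symm : E.r e = p.src) hpne hdp
    obtain ⟨l2, h2', hl2, _⟩ := extract_rot_back He ((hrr.symm.trans hps.symm) : E.r e' = p.src) hpne hdp
    have h12 : l1 ++ [e] = l2 ++ [e'] := hl1.symm.trans hl2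
    have hsome : some e = some e' := (List.getLast?_concat (l := l1)).symm.trans
      (by rw [h12]; exact List.getLast?_concat (l := l2))
    exact Option.some_injective _ hsome
  have hout_e : ∀ v : E.V, ∃ e : E.Edge, E.s e = v := by
    intro v
    obtain ⟨p, hdp, hpne, hps⟩ := hPall v
    cases hpe : p.edges with
    | nil => exact absurd hpe hpne
    | cons a t =>
        refine ⟨a, ?_⟩
        have := p.ok
        rw [hpe, ok_cons] at this
        exact this.1.trans hps
  have hin_e : ∀ v : E.V, ∃ e : E.Edge, E.r e = v := by
    intro v
    obtain ⟨p, hdp, hpne, hps⟩ := hPall v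
    rcases List.eq_nil_or_concat p.edges with hnil | ⟨l', e', hl⟩
    · exact absurd hnil hpne
    · refine ⟨e', ?_⟩
      have h1 : p.tgt = E.r e' := by
        show E.dst p.src p.edges = E.r e'
        rw [hl, List.concat_eq_append, dst_append]
        rfl
      rw [← h1, F1 p hdp, hps]
  have sbij : Function.Bijective E.s := ⟨fun e e' h => hout_u e e' h, fun v => hout_e v⟩
  have rbij : Function.Bijective E.r := ⟨fun e e' h => hin_u e e' h, fun v => hin_e v⟩
  -- finiteness
  choose pv hpv1 hpv2 hpv3 using hPall
  have hfinV : Finite E.V := by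
    apply Finite.of_injective (fun v : E.V =>
      (⟨pv v, Finsupp.mem_support_iff.mpr (hpv1 v)⟩ : d.support))
    intro u v h
    have := congrArg (fun q => Pth.src q.1) h
    simp only at this
    rw [hpv3 u, hpv3 v] at this
    exact this
  have hfinE : Finite E.Edge := Finite.of_injective E.s sbij.1
  set sE : E.Edge ≃ E.V := Equiv.ofBijective E.s sbij with hsE
  set σ : E.V → E.V := fun v => E.r (sE.symm v) with hσ
  have hsσ : ∀ v, E.s (sE.symm v) = v := fun v => sE.apply_symm_apply v
  have σbij : Function.Bijective σ := Function.Bijective.comp rbij sE.symm.bijective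
  -- step characterization
  have hstepσ : ∀ u v : E.V, E.Step u v → v = σ u ∨ u = σ v := by
    rintro u v (⟨e, hs, hr⟩ | ⟨e, hs, hr⟩)
    · left
      have he' : sE.symm u = e := by
        apply sbij.1
        rw [hsσ u, hs]
      show v = E.r (sE.symm u)
      rw [he', hr]
    · right
      have he' : sE.symm v = e := by
        apply sbij.1
        rw [hsσ v, hs]
      show u = E.r (sE.symm v)
      rw [he', hr]
  set v0 : E.V := p0.src with hv0
  -- v0 is a periodic point of σ
  have hper : v0 ∈ Function.periodicPts σ := by
    obtain ⟨a, b, hab, heq⟩ := Finite.exists_ne_map_eq_of_infinite (fun n : ℕ => σ^[n] v0)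
    rcases Nat.lt_or_ge a b with hlt | hge
    · refine ⟨b - a, by omega, ?_⟩
      have hba : b = a + (b - a) := by omega
      rw [hba, Function.iterate_add_apply] at heq
      exact ((σbij.1.iterate a) heq).symm
    · have hlt2 : b < a := by omega
      refine ⟨a - b, by omega, ?_⟩
      have hba : a = b + (a - b) := by omega
      rw [hba, Function.iterate_add_apply] at heq
      exact ((σbij.1.iterate b) heq.symm).symm
  set m : ℕ := Function.minimalPeriod σ v0 with hm
  have hmpos : 0 < m := Function.minimalPeriod_pos_of_mem_periodicPts hper
  have hmv : σ^[m] v0 = v0 := Function.iterate_minimalPeriod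
  -- the orbit is everything
  have horb : ∀ v : E.V, ∃ k : ℕ, σ^[k] v0 = v := by
    intro v
    have hcv := hconn v0 v
    induction hcv with
    | refl => exact ⟨0, rfl⟩
    | tail _ hbc ih =>
        obtain ⟨kk, hkk⟩ := ih
        rcases hstepσ _ _ hbc with h | h
        · exact ⟨kk + 1, by rw [Function.iterate_succ_apply', hkk, ← h]⟩
        · have h3 : kk + m - 1 + 1 = kk + m := by omega
          refine ⟨kk + m - 1, σbij.1 ?_⟩
          have h1 : σ (σ^[kk + m - 1] v0) = σ^[kk + m] v0 := by
            rw [← h3]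
            exact (Function.iterate_succ_apply' σ (kk + m - 1) v0).symm
          rw [h1, Function.iterate_add_apply, hmv, hkk, ← h]
  have hvinj : Function.Injective (fun i : Fin m => σ^[i.1] v0) := by
    intro i j hij
    have := Function.iterate_injOn_Iio_minimalPeriod (f := σ) (x := v0)
      (Set.mem_Iio.mpr i.2) (Set.mem_Iio.mpr j.2) hij
    exact Fin.ext this
  have hvsurj : Function.Surjective (fun i : Fin m => σ^[i.1] v0) := by
    intro v
    obtain ⟨kk, hkk⟩ := horb v
    refine ⟨⟨kk % m, Nat.mod_lt _ hmpos⟩, ?_⟩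
    simp only
    rw [Function.iterate_mod_minimalPeriod_eq, hkk]
  set hvE : Fin m ≃ E.V := Equiv.ofBijective _ ⟨hvinj, hvsurj⟩ with hhvE
  refine ⟨m, hmpos, hvE, hvE.trans sE.symm, ?_⟩
  intro i
  constructor
  · show E.s (sE.symm (hvE i)) = hvE i
    exact hsσ (hvE i)
  · show E.r (sE.symm (hvE i)) = hvE ⟨(i.1 + 1) % m, Nat.mod_lt _ hmpos⟩
    have h1 : E.r (sE.symm (hvE i)) = σ (hvE i) := rfl
    have h2 : hvE i = σ^[i.1] v0 := rfl
    have h3 : hvE ⟨(i.1 + 1) % m, Nat.mod_lt _ hmpos⟩ = σ^[(i.1 + 1) % m] v0 := rfl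
    rw [h1, h2, h3, Function.iterate_mod_minimalPeriod_eq, Function.iterate_succ_apply']

end
end DirGraph

/-- If `E` is a (connected) graph with `0 ≠ Z(KE) ⊄ K·1`,
then `E` is a cycle. -/
theorem stmt7 (K : Type) [Field K] (E : DirGraph) (hconn : E.IsConnectedGraph)
    (hne : ∃ z ∈ E.relCenter K, z ≠ 0)
    (hns : ¬ E.relCenter K ⊆ E.scalarSet K) :
    E.IsCycleGraph := by
  classical
  rw [Set.not_subset] at hns
  obtain ⟨z, hzc, hzs⟩ := hns
  obtain ⟨hzKE, hcom⟩ := hzc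
  have hz0 : z ≠ 0 := fun h => hzs ⟨0, by show (0:K) • _ = z; rw [zero_smul, h]⟩
  have zPS := DirGraph.KE_le_PSpan hzKE
  obtain ⟨d, hzd, hcd⟩ := DirGraph.coeff_rep zPS
  have Hv : ∀ u : E.V,
      DirGraph.projz K E (MonoidAlgebra.single (.pth (.triv u) : DirGraph.PMon E) 1 * DirGraph.dlift K d) =
      DirGraph.projz K E (DirGraph.dlift K d * MonoidAlgebra.single (.pth (.triv u) : DirGraph.PMon E) 1) := by
    intro u
    have := DirGraph.central_eqn_vtx hzKE hcom u
    rwa [hcd] at this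
  have He : ∀ e : E.Edge,
      DirGraph.projz K E (MonoidAlgebra.single (.pth (.sgl e) : DirGraph.PMon E) 1 * DirGraph.dlift K d) =
      DirGraph.projz K E (DirGraph.dlift K d * MonoidAlgebra.single (.pth (.sgl e) : DirGraph.PMon E) 1) := by
    intro e
    have := DirGraph.central_eqn_edg hzKE hcom e
    rwa [hcd] at this
  have hd0 : d ≠ 0 := by
    intro h
    apply hz0
    rw [hzd, h, Finsupp.sum_zero_index]
  by_cases htriv : ∀ p : E.Pth, d p ≠ 0 → p.edges = []
  · exact absurd (DirGraph.caseA hconn hzd He hd0 htriv) hzs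
  · push_neg at htriv
    obtain ⟨p0, hdp0, hp0ne⟩ := htriv
    exact DirGraph.caseB hconn Hv He hdp0 hp0ne
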